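/- Let M ≥ 0 and let (f_p)_{p≥1} be a sequence in L¹(S₂,μ) with ‖f_p‖_{L¹(S₂,μ)} ≤ M/p³ for all p ≥ 1, and set f(s) = ∑_{p≥1} f_p H_p(s) (absolutely and uniformly convergent in L¹(S₂,μ)). Then there exists an absolute constant C such that for every integer N ≥ 1: ‖∫₀¹ f(s) cos(Nπs) ds‖_{L¹(S₂,μ)} ≤ C M / N². (Lemma 6.2 of the paper, with M = ‖f‖_{X₁}.) -/

import Mathlib

open MeasureTheory Real Set

noncomputable section

/-- Euclidean space ℝ³. -/
abbrev E3 : Type := EuclideanSpace ℝ (Fin 3)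

/-- The unit sphere S₂ in ℝ³. -/
def S2 : Set E3 := Metric.sphere (0 : E3) 1

/-- The surface measure on S₂: the 2-dimensional Hausdorff measure restricted to S₂. -/
def mu : Measure E3 := (μH[2]).restrict S2

/-- The quadratic form κ:u⊗u = ⟨u, κu⟩. -/
def quadForm (κ : Matrix (Fin 3) (Fin 3) ℝ) (u : E3) : ℝ :=
  ∑ i, ∑ j, κ i j * u i * u j

/-- The tangent vector field 𝒢(u) = κu − (κ:u⊗u)u. -/
def Gvec (κ : Matrix (Fin 3) (Fin 3) ℝ) (u : E3) : E3 :=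
  (EuclideanSpace.equiv (Fin 3) ℝ).symm (fun i => (∑ j, κ i j * u j) - quadForm κ u * u i)

/-- H_p(s) = √2 sin(pπs). -/
def Hfun (p : ℕ) (s : ℝ) : ℝ := Real.sqrt 2 * Real.sin ((p : ℝ) * π * s)

/- ### Auxiliary material for the proof -/

/-- The cosine Fourier coefficient of `H_p` against `cos (Nπs)`. -/
def cCoef (N p : ℕ) : ℝ := ∫ s in (0:ℝ)..1, Hfun p s * Real.cos ((N : ℝ) * π * s)

lemma integral_sin_cmul (c : ℝ) (hc : c ≠ 0) :
    ∫ s in (0:ℝ)..1, Real.sin (c * s) = (1 - Real.cos c) / c := by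
  rw [intervalIntegral.integral_comp_mul_left (fun x => Real.sin x) hc]
  simp [integral_sin]
  field_simp

lemma sqrt_two_le : Real.sqrt 2 ≤ 1.5 := by
  nlinarith [Real.sq_sqrt (show (0:ℝ) ≤ 2 by norm_num), Real.sqrt_nonneg 2]

lemma Hfun_abs_le (p : ℕ) (s : ℝ) : |Hfun p s| ≤ Real.sqrt 2 := by
  rw [Hfun, abs_mul, abs_of_nonneg (Real.sqrt_nonneg 2)]
  have h1 := Real.abs_sin_le_one ((p:ℝ) * π * s)
  nlinarith [Real.sqrt_nonneg 2]

lemma cCoef_abs_le (N p : ℕ) : |cCoef N p| ≤ Real.sqrt 2 := by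
  have h : ∀ s ∈ Set.uIoc (0:ℝ) 1, ‖Hfun p s * Real.cos ((N:ℝ) * π * s)‖ ≤ Real.sqrt 2 := by
    intro s _
    rw [Real.norm_eq_abs, abs_mul]
    calc |Hfun p s| * |Real.cos ((N:ℝ) * π * s)| ≤ Real.sqrt 2 * 1 :=
          mul_le_mul (Hfun_abs_le p s) (Real.abs_cos_le_one _) (abs_nonneg _) (Real.sqrt_nonneg 2)
      _ = Real.sqrt 2 := mul_one _
  have := intervalIntegral.norm_integral_le_of_norm_le_const (C := Real.sqrt 2) h
  rw [show |(1:ℝ) - 0| = 1 by norm_num, mul_one] at this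
  exact this

lemma cCoef_zero (N : ℕ) : cCoef N 0 = 0 := by
  simp [cCoef, Hfun]

lemma cCoef_diag (N : ℕ) (hN : 1 ≤ N) : cCoef N N = 0 := by
  have hc : (2 * (N:ℝ) * π) ≠ 0 := by
    have : (0:ℝ) < N := by exact_mod_cast hN
    positivity
  have h1 : ∀ s : ℝ, Hfun N s * Real.cos ((N:ℝ) * π * s)
      = (Real.sqrt 2 / 2) * Real.sin ((2 * (N:ℝ) * π) * s) := by
    intro s
    have h2 : (2 * (N:ℝ) * π) * s = 2 * ((N:ℝ) * π * s) := by ring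
    rw [Hfun, h2, Real.sin_two_mul]; ring
  have : cCoef N N = ∫ s in (0:ℝ)..1, (Real.sqrt 2 / 2) * Real.sin ((2 * (N:ℝ) * π) * s) := by
    unfold cCoef
    exact intervalIntegral.integral_congr (fun s _ => h1 s)
  rw [this, intervalIntegral.integral_const_mul, integral_sin_cmul _ hc]
  have h3 : Real.cos (2 * (N:ℝ) * π) = 1 := by
    have : 2 * (N:ℝ) * π = (N:ℝ) * (2 * π) := by ring
    rw [this, Real.cos_nat_mul_two_pi]
  rw [h3]; simp

lemma cCoef_off (N p : ℕ) (hN : 1 ≤ N) (hp : 1 ≤ p) (hpN : p ≠ N) :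
    |cCoef N p| ≤ (p:ℝ) / |(p:ℝ)^2 - (N:ℝ)^2| := by
  have hNR : (1:ℝ) ≤ N := by exact_mod_cast hN
  have hpR : (1:ℝ) ≤ p := by exact_mod_cast hp
  have hpNR : (p:ℝ) ≠ N := by exact_mod_cast hpN
  have hApos : (0:ℝ) < ((p:ℝ) + N) * π := by positivity
  have hA : ((p:ℝ) + N) * π ≠ 0 := ne_of_gt hApos
  have hB : ((p:ℝ) - N) * π ≠ 0 := by
    have : (p:ℝ) - N ≠ 0 := sub_ne_zero.mpr hpNR
    exact mul_ne_zero this Real.pi_ne_zero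
  have h1 : ∀ s : ℝ, Hfun p s * Real.cos ((N:ℝ) * π * s)
      = (Real.sqrt 2 / 2) * (Real.sin ((((p:ℝ) + N) * π) * s) + Real.sin ((((p:ℝ) - N) * π) * s)) := by
    intro s
    have e1 : (((p:ℝ) + N) * π) * s = (p:ℝ) * π * s + (N:ℝ) * π * s := by ring
    have e2 : (((p:ℝ) - N) * π) * s = (p:ℝ) * π * s - (N:ℝ) * π * s := by ring
    rw [Hfun, e1, e2, Real.sin_add, Real.sin_sub]; ring
  have hint : ∀ c : ℝ, IntervalIntegrable (fun s => Real.sin (c * s)) volume 0 1 := by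
    intro c
    exact (Real.continuous_sin.comp (continuous_const.mul continuous_id)).intervalIntegrable 0 1
  have h2 : cCoef N p
      = (Real.sqrt 2 / 2) * ((1 - Real.cos (((p:ℝ) + N) * π)) / (((p:ℝ) + N) * π)
          + (1 - Real.cos (((p:ℝ) - N) * π)) / (((p:ℝ) - N) * π)) := by
    unfold cCoef
    rw [intervalIntegral.integral_congr (fun s _ => h1 s),
      intervalIntegral.integral_const_mul,
      intervalIntegral.integral_add (hint _) (hint _),
      integral_sin_cmul _ hA, integral_sin_cmul _ hB]
  have hcos : Real.cos (((p:ℝ) - N) * π) = Real.cos (((p:ℝ) + N) * π) := by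
    have hper := (Real.cos_periodic.nat_mul N) (((p:ℝ) - N) * π)
    have e : ((p:ℝ) - N) * π + (N:ℝ) * (2 * π) = ((p:ℝ) + N) * π := by ring
    rw [e] at hper
    exact hper.symm
  set K := 1 - Real.cos (((p:ℝ) + N) * π) with hK
  have hK0 : 0 ≤ K := by
    have := Real.cos_le_one (((p:ℝ) + N) * π); linarith
  have hK2 : K ≤ 2 := by
    have := Real.neg_one_le_cos (((p:ℝ) + N) * π); linarith
  rw [hcos] at h2
  have h3 : cCoef N p = Real.sqrt 2 * K * (p:ℝ) / (((p:ℝ)^2 - (N:ℝ)^2) * π) := by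
    rw [h2]
    have hpi := Real.pi_ne_zero
    have hs : (p:ℝ) + N ≠ 0 := ne_of_gt (by positivity)
    have hd : (p:ℝ) - N ≠ 0 := sub_ne_zero.mpr hpNR
    have hsq : (p:ℝ)^2 - (N:ℝ)^2 ≠ 0 := by
      intro h
      apply hd
      have := sq_abs (p:ℝ)
      nlinarith [hs]
    field_simp
    ring
  have hDpos : (0:ℝ) < |(p:ℝ)^2 - (N:ℝ)^2| := by
    have hd : (p:ℝ) - N ≠ 0 := sub_ne_zero.mpr hpNR
    have : (p:ℝ)^2 - (N:ℝ)^2 ≠ 0 := by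
      intro h; apply hd; nlinarith
    exact abs_pos.mpr this
  rw [h3, abs_div, abs_mul, abs_mul, abs_mul]
  rw [abs_of_nonneg (Real.sqrt_nonneg 2), abs_of_nonneg hK0,
    abs_of_nonneg (by positivity : (0:ℝ) ≤ (p:ℝ)), abs_of_pos Real.pi_pos]
  rw [div_le_div_iff₀ (by positivity) hDpos]
  have hsqrt := sqrt_two_le
  have hsq2 : 0 ≤ Real.sqrt 2 := Real.sqrt_nonneg 2
  have hpi3 : (3:ℝ) < π := Real.pi_gt_three
  have hpd : 0 < (p:ℝ) * |(p:ℝ)^2 - (N:ℝ)^2| := mul_pos (by positivity) hDpos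
  nlinarith [mul_le_mul_of_nonneg_right (show Real.sqrt 2 * K ≤ π by nlinarith) (le_of_lt hpd)]

/-- The comparison series `1/(p² |p² − N²|)` (with the degenerate indices removed). -/
def Ebnd (N p : ℕ) : ℝ :=
  if p = 0 ∨ p = N then 0 else 1 / ((p:ℝ)^2 * |(p:ℝ)^2 - (N:ℝ)^2|)

lemma Ebnd_nonneg (N p : ℕ) : 0 ≤ Ebnd N p := by
  unfold Ebnd; split <;> positivity

def majorant (N p : ℕ) : ℝ :=
  2 / (N:ℝ)^2 * (1 / (p:ℝ)^2) + (if p ≤ 2*N then 4 / (N:ℝ)^3 else 0)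

lemma majorant_summable (N : ℕ) : Summable (majorant N) := by
  apply Summable.add
  · exact (Real.summable_one_div_nat_pow.mpr one_lt_two).mul_left _
  · apply summable_of_ne_finset_zero (s := Finset.range (2*N+1))
    intro p hp
    simp only [Finset.mem_range, not_lt] at hp
    have : ¬ p ≤ 2*N := by omega
    simp [this]

lemma Ebnd_le_majorant (N p : ℕ) (hN : 1 ≤ N) : Ebnd N p ≤ majorant N p := by
  have hKR : (1:ℝ) ≤ N := by exact_mod_cast hN
  by_cases h0 : p = 0 ∨ p = N
  · rw [Ebnd, if_pos h0]
    unfold majorant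
    have : (0:ℝ) ≤ if p ≤ 2*N then 4 / (N:ℝ)^3 else 0 := by positivity
    positivity
  · rw [Ebnd, if_neg h0]
    push_neg at h0
    obtain ⟨hp0, hpN⟩ := h0
    have hp1 : 1 ≤ p := Nat.one_le_iff_ne_zero.mpr hp0
    have hPR : (1:ℝ) ≤ p := by exact_mod_cast hp1
    have habs1 : (1:ℝ) ≤ |(p:ℝ) - N| := by
      have hz : ((p:ℤ) - N) ≠ 0 := by
        intro h; apply hpN; omega
      have := Int.one_le_abs hz
      have hcast : ((1:ℤ):ℝ) ≤ ((|(p:ℤ) - N| : ℤ) : ℝ) := by exact_mod_cast this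
      rw [Int.cast_abs] at hcast
      push_cast at hcast ⊢
      exact hcast
    have hfact : |(p:ℝ)^2 - (N:ℝ)^2| = |(p:ℝ) - N| * ((p:ℝ) + N) := by
      have : (p:ℝ)^2 - (N:ℝ)^2 = ((p:ℝ) - N) * ((p:ℝ) + N) := by ring
      rw [this, abs_mul, abs_of_pos (by positivity : (0:ℝ) < (p:ℝ) + N)]
    by_cases hcase : (N:ℝ) ≤ 2 * |(p:ℝ) - N|
    · have h1 : 1 / ((p:ℝ)^2 * |(p:ℝ)^2 - (N:ℝ)^2|) ≤ 2 / (N:ℝ)^2 * (1 / (p:ℝ)^2) := by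
        have hre : 2 / (N:ℝ)^2 * (1 / (p:ℝ)^2) = 2 / ((N:ℝ)^2 * (p:ℝ)^2) := by
          field_simp
        rw [hre, div_le_div_iff₀ (by rw [hfact]; positivity) (by positivity), hfact]
        have hk : (N:ℝ)*(N:ℝ) ≤ (2*|(p:ℝ) - N|)*((p:ℝ)+N) :=
          mul_le_mul hcase (by linarith) (by linarith) (by positivity)
        nlinarith [sq_nonneg (p:ℝ), hk, hPR]
      have h2 : (0:ℝ) ≤ if p ≤ 2*N then 4 / (N:ℝ)^3 else 0 := by positivity
      unfold majorant; linarith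
    · push_neg at hcase
      have hlow : (N:ℝ) - p ≤ |(p:ℝ) - N| := by
        rw [abs_sub_comm]; exact le_abs_self _
      have hhigh : (p:ℝ) - N ≤ |(p:ℝ) - N| := le_abs_self _
      have hple : p ≤ 2*N := by
        have : (p:ℝ) ≤ 2*N := by nlinarith
        exact_mod_cast this
      have h1 : 1 / ((p:ℝ)^2 * |(p:ℝ)^2 - (N:ℝ)^2|) ≤ 4 / (N:ℝ)^3 := by
        rw [div_le_div_iff₀ (by rw [hfact]; positivity) (by positivity), hfact]
        have h2p : (N:ℝ) ≤ 2 * p := by nlinarith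
        have ha : (N:ℝ)^2 ≤ 4 * (p:ℝ)^2 := by nlinarith
        have hb : (N:ℝ) ≤ |(p:ℝ) - N| * ((p:ℝ)+N) := by
          have := mul_le_mul habs1 (by linarith : (N:ℝ) ≤ (p:ℝ)+N) (by linarith) (abs_nonneg _)
          linarith [this]
        nlinarith [mul_le_mul ha hb (by linarith) (by positivity)]
      rw [majorant, if_pos hple]
      have : (0:ℝ) ≤ 2 / (N:ℝ)^2 * (1 / (p:ℝ)^2) := by positivity
      linarith

lemma Ebnd_summable (N : ℕ) (hN : 1 ≤ N) : Summable (Ebnd N) :=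
  Summable.of_nonneg_of_le (Ebnd_nonneg N) (fun p => Ebnd_le_majorant N p hN) (majorant_summable N)

lemma majorant_tsum_le (N : ℕ) (hN : 1 ≤ N) : ∑' p, majorant N p ≤ 16 / (N:ℝ)^2 := by
  have hKR : (1:ℝ) ≤ N := by exact_mod_cast hN
  have hs1 : Summable (fun p : ℕ => 2 / (N:ℝ)^2 * (1 / (p:ℝ)^2)) :=
    (Real.summable_one_div_nat_pow.mpr one_lt_two).mul_left _
  have hs2 : Summable (fun p : ℕ => if p ≤ 2*N then 4 / (N:ℝ)^3 else 0) := by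
    apply summable_of_ne_finset_zero (s := Finset.range (2*N+1))
    intro p hp
    simp only [Finset.mem_range, not_lt] at hp
    have : ¬ p ≤ 2*N := by omega
    simp [this]
  simp only [majorant]
  rw [Summable.tsum_add hs1 hs2, tsum_mul_left]
  have hzeta : ∑' (p : ℕ), 1 / (p:ℝ)^2 = π^2/6 := hasSum_zeta_two.tsum_eq
  rw [hzeta]
  have h2 : ∑' (p : ℕ), (if p ≤ 2*N then 4 / (N:ℝ)^3 else 0) = (2*N+1 : ℕ) * (4 / (N:ℝ)^3) := by
    rw [tsum_eq_sum (s := Finset.range (2*N+1))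
      (by intro p hp; simp only [Finset.mem_range, not_lt] at hp
          have : ¬ p ≤ 2*N := by omega
          simp [this])]
    rw [Finset.sum_congr rfl (fun p hp => by
      simp only [Finset.mem_range] at hp
      rw [if_pos (by omega)])]
    rw [Finset.sum_const, Finset.card_range, nsmul_eq_mul]
  rw [h2]
  have hpi : π^2/6 ≤ 2 := by nlinarith [Real.pi_lt_d2, Real.pi_pos]
  have e1 : 2 / (N:ℝ)^2 * (π^2/6) ≤ 4 / (N:ℝ)^2 := by
    have := mul_le_mul_of_nonneg_left hpi (by positivity : (0:ℝ) ≤ 2 / (N:ℝ)^2)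
    calc 2 / (N:ℝ)^2 * (π^2/6) ≤ 2 / (N:ℝ)^2 * 2 := this
      _ = 4 / (N:ℝ)^2 := by ring
  have e2 : ((2*N+1 : ℕ):ℝ) * (4 / (N:ℝ)^3) ≤ 12 / (N:ℝ)^2 := by
    have hle : ((2*N+1 : ℕ):ℝ) ≤ 3 * (N:ℝ) := by push_cast; linarith
    calc ((2*N+1 : ℕ):ℝ) * (4 / (N:ℝ)^3) ≤ 3 * (N:ℝ) * (4 / (N:ℝ)^3) :=
          mul_le_mul_of_nonneg_right hle (by positivity)
      _ = 12 / (N:ℝ)^2 := by field_simp; ring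
  calc 2 / (N:ℝ)^2 * (π^2/6) + ((2*N+1 : ℕ):ℝ) * (4 / (N:ℝ)^3)
      ≤ 4 / (N:ℝ)^2 + 12 / (N:ℝ)^2 := add_le_add e1 e2
    _ = 16 / (N:ℝ)^2 := by ring

lemma Ebnd_tsum_le (N : ℕ) (hN : 1 ≤ N) : ∑' p, Ebnd N p ≤ 16 / (N:ℝ)^2 :=
  le_trans (Summable.tsum_le_tsum (fun p => Ebnd_le_majorant N p hN) (Ebnd_summable N hN)
    (majorant_summable N)) (majorant_tsum_le N hN)

/-- Lemma 6.2: if ‖f_p‖_{L¹(S₂)} ≤ M/p³ and f(s) = ∑ f_p H_p(s), then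
‖∫₀¹ f(s) cos(Nπs) ds‖_{L¹(S₂)} ≤ C M / N² for an absolute constant C. -/
theorem cos_coefficient_estimate :
    ∃ C : ℝ, 0 < C ∧
    ∀ (M : ℝ) (fp : ℕ → E3 → ℝ), 0 ≤ M →
      (∀ p : ℕ, 1 ≤ p → Integrable (fp p) mu ∧ ∫ u, |fp p u| ∂mu ≤ M / (p : ℝ) ^ 3) →
      ∀ N : ℕ, 1 ≤ N →
        ∫ u, |∫ s in (0:ℝ)..1, (∑' p : ℕ, fp p u * Hfun p s) * Real.cos ((N : ℝ) * π * s)| ∂mu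
          ≤ C * M / (N : ℝ) ^ 2 := by
  refine ⟨16, by norm_num, ?_⟩
  intro M fp hM hfp N hN
  set gp : ℕ → E3 → ℝ := fun p => if p = 0 then 0 else fp p with hgp
  have hgInt : ∀ p, Integrable (gp p) mu := by
    intro p
    by_cases h : p = 0
    · simp only [hgp, h, if_pos]
      exact integrable_zero _ _ _
    · simp only [hgp, if_neg h]
      exact (hfp p (Nat.one_le_iff_ne_zero.mpr h)).1
  have hgBound : ∀ p, ∫ u, |gp p u| ∂mu ≤ M / (p:ℝ)^3 := by
    intro p
    by_cases h : p = 0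
    · simp [hgp, h]
    · simp only [hgp, if_neg h]
      exact (hfp p (Nat.one_le_iff_ne_zero.mpr h)).2
  -- a.e. summability
  have hmeas : ∀ p, AEMeasurable (fun u => (‖gp p u‖₊ : ENNReal)) mu :=
    fun p => (hgInt p).aestronglyMeasurable.enorm
  have hMp3 : Summable (fun p : ℕ => M / (p:ℝ)^3) := by
    have := (Real.summable_one_div_nat_pow.mpr (by norm_num : 1 < 3)).mul_left M
    refine this.congr (fun p => ?_)
    rw [mul_one_div]
  have hsum_lint : ∑' p, ∫⁻ u, (‖gp p u‖₊ : ENNReal) ∂mu ≠ ⊤ := by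
    have hb : ∀ p, ∫⁻ u, (‖gp p u‖₊ : ENNReal) ∂mu ≤ ENNReal.ofReal (M / (p:ℝ)^3) := by
      intro p
      rw [show ∫⁻ u, (‖gp p u‖₊ : ENNReal) ∂mu = ENNReal.ofReal (∫ u, ‖gp p u‖ ∂mu) from
        (MeasureTheory.ofReal_integral_norm_eq_lintegral_enorm (hgInt p)).symm]
      apply ENNReal.ofReal_le_ofReal
      have : ∫ u, ‖gp p u‖ ∂mu = ∫ u, |gp p u| ∂mu := by
        simp [Real.norm_eq_abs]
      rw [this]; exact hgBound p
    have hlt : ∑' p, ∫⁻ u, (‖gp p u‖₊ : ENNReal) ∂mu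
        ≤ ENNReal.ofReal (∑' p : ℕ, M / (p:ℝ)^3) := by
      calc ∑' p, ∫⁻ u, (‖gp p u‖₊ : ENNReal) ∂mu
          ≤ ∑' p : ℕ, ENNReal.ofReal (M / (p:ℝ)^3) := ENNReal.tsum_le_tsum hb
        _ = ENNReal.ofReal (∑' p : ℕ, M / (p:ℝ)^3) :=
            (ENNReal.ofReal_tsum_of_nonneg (fun p => by positivity) hMp3).symm
    exact ne_top_of_le_ne_top ENNReal.ofReal_ne_top hlt
  have hae : ∀ᵐ u ∂mu, Summable (fun p => |gp p u|) := by
    have h1 : ∫⁻ u, ∑' p, (‖gp p u‖₊ : ENNReal) ∂mu ≠ ⊤ := by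
      rw [lintegral_tsum hmeas]; exact hsum_lint
    filter_upwards [ae_lt_top' (AEMeasurable.ennreal_tsum hmeas) h1] with u hu
    have hsumm := ENNReal.tsum_coe_ne_top_iff_summable_coe.mp hu.ne
    refine hsumm.congr (fun p => ?_)
    simp [Real.norm_eq_abs]
  -- per-u inner estimate
  have key : ∀ u : E3, Summable (fun p => |gp p u|) →
      |∫ s in (0:ℝ)..1, (∑' p : ℕ, fp p u * Hfun p s) * Real.cos ((N:ℝ) * π * s)|
        ≤ ∑' p, |gp p u| * |cCoef N p| := by
    intro u hu
    have hintg : ∀ s : ℝ, (∑' p : ℕ, fp p u * Hfun p s) * Real.cos ((N:ℝ) * π * s)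
        = ∑' p : ℕ, gp p u * (Hfun p s * Real.cos ((N:ℝ) * π * s)) := by
      intro s
      rw [← tsum_mul_right]
      apply tsum_congr; intro p
      by_cases h : p = 0
      · simp [h, Hfun, hgp]
      · simp only [hgp, if_neg h]; ring
    have hFi : ∀ p : ℕ, Integrable (fun s => gp p u * (Hfun p s * Real.cos ((N:ℝ) * π * s)))
        (volume.restrict (Set.Ioc (0:ℝ) 1)) := by
      intro p
      have hc : Continuous (fun s => gp p u * (Hfun p s * Real.cos ((N:ℝ) * π * s))) := by
        apply continuous_const.mul
        apply Continuous.mul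
        · exact continuous_const.mul (Real.continuous_sin.comp (continuous_const.mul continuous_id))
        · exact Real.continuous_cos.comp (continuous_const.mul continuous_id)
      exact hc.integrableOn_Ioc
    have hFle : ∀ p : ℕ, ∀ s : ℝ, ‖gp p u * (Hfun p s * Real.cos ((N:ℝ) * π * s))‖
        ≤ |gp p u| * Real.sqrt 2 := by
      intro p s
      rw [Real.norm_eq_abs, abs_mul]
      apply mul_le_mul_of_nonneg_left _ (abs_nonneg _)
      rw [abs_mul]
      calc |Hfun p s| * |Real.cos ((N:ℝ) * π * s)| ≤ Real.sqrt 2 * 1 :=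
            mul_le_mul (Hfun_abs_le p s) (Real.abs_cos_le_one _) (abs_nonneg _) (Real.sqrt_nonneg 2)
        _ = Real.sqrt 2 := mul_one _
    have hFnorm : ∀ p : ℕ, ∫ s, ‖gp p u * (Hfun p s * Real.cos ((N:ℝ) * π * s))‖
        ∂(volume.restrict (Set.Ioc (0:ℝ) 1)) ≤ |gp p u| * Real.sqrt 2 := by
      intro p
      have hconst : Integrable (fun _ : ℝ => |gp p u| * Real.sqrt 2)
          (volume.restrict (Set.Ioc (0:ℝ) 1)) := by
        apply integrable_const_iff.mpr
        right
        infer_instance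
      calc ∫ s, ‖gp p u * (Hfun p s * Real.cos ((N:ℝ) * π * s))‖
            ∂(volume.restrict (Set.Ioc (0:ℝ) 1))
          ≤ ∫ _, |gp p u| * Real.sqrt 2 ∂(volume.restrict (Set.Ioc (0:ℝ) 1)) :=
            integral_mono ((hFi p).norm) hconst (fun s => hFle p s)
        _ = |gp p u| * Real.sqrt 2 := by
            simp [integral_const, Real.volume_Ioc]
    have hFsum : Summable (fun p : ℕ => ∫ s, ‖gp p u * (Hfun p s * Real.cos ((N:ℝ) * π * s))‖
        ∂(volume.restrict (Set.Ioc (0:ℝ) 1))) :=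
      Summable.of_nonneg_of_le (fun p => integral_nonneg (fun s => norm_nonneg _))
        hFnorm (hu.mul_right (Real.sqrt 2))
    have hinner : ∫ s in (0:ℝ)..1, (∑' p : ℕ, fp p u * Hfun p s) * Real.cos ((N:ℝ) * π * s)
        = ∑' p, gp p u * cCoef N p := by
      rw [intervalIntegral.integral_congr (fun s _ => hintg s)]
      rw [intervalIntegral.integral_of_le (by norm_num : (0:ℝ) ≤ 1)]
      rw [← MeasureTheory.integral_tsum_of_summable_integral_norm hFi hFsum]
      apply tsum_congr
      intro p
      rw [MeasureTheory.integral_const_mul]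
      congr 1
      rw [cCoef, intervalIntegral.integral_of_le (by norm_num : (0:ℝ) ≤ 1)]
    rw [hinner]
    have hsn : Summable (fun p => ‖gp p u * cCoef N p‖) := by
      apply Summable.of_nonneg_of_le (fun p => norm_nonneg _) (fun p => ?_)
        (hu.mul_right (Real.sqrt 2))
      rw [Real.norm_eq_abs, abs_mul]
      exact mul_le_mul_of_nonneg_left (cCoef_abs_le N p) (abs_nonneg _)
    calc |∑' p, gp p u * cCoef N p| = ‖∑' p, gp p u * cCoef N p‖ := (Real.norm_eq_abs _).symm
      _ ≤ ∑' p, ‖gp p u * cCoef N p‖ := norm_tsum_le_tsum_norm hsn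
      _ = ∑' p, |gp p u| * |cCoef N p| := tsum_congr fun p => by
          rw [Real.norm_eq_abs, abs_mul]
  -- term-wise bound for the integrated series
  have hNR : (1:ℝ) ≤ N := by exact_mod_cast hN
  have hterm : ∀ p : ℕ, (∫ u, |gp p u| ∂mu) * |cCoef N p| ≤ M * Ebnd N p := by
    intro p
    by_cases h0 : p = 0 ∨ p = N
    · have hc0 : cCoef N p = 0 := by
        rcases h0 with h | h
        · rw [h]; exact cCoef_zero N
        · rw [h]; exact cCoef_diag N hN
      rw [hc0, abs_zero, mul_zero]
      exact mul_nonneg hM (Ebnd_nonneg N p)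
    · push_neg at h0
      obtain ⟨hp0, hpN⟩ := h0
      have hp1 : 1 ≤ p := Nat.one_le_iff_ne_zero.mpr hp0
      have hPR : (1:ℝ) ≤ p := by exact_mod_cast hp1
      have hDpos : (0:ℝ) < |(p:ℝ)^2 - (N:ℝ)^2| := by
        have hpNR : (p:ℝ) ≠ N := by exact_mod_cast hpN
        have hd : (p:ℝ) - N ≠ 0 := sub_ne_zero.mpr hpNR
        have : (p:ℝ)^2 - (N:ℝ)^2 ≠ 0 := by
          intro h; apply hd; nlinarith
        exact abs_pos.mpr this
      have h1 : (∫ u, |gp p u| ∂mu) * |cCoef N p|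
          ≤ (M / (p:ℝ)^3) * ((p:ℝ) / |(p:ℝ)^2 - (N:ℝ)^2|) := by
        apply mul_le_mul (hgBound p) (cCoef_off N p hN hp1 hpN) (abs_nonneg _)
        positivity
      have h2 : (M / (p:ℝ)^3) * ((p:ℝ) / |(p:ℝ)^2 - (N:ℝ)^2|)
          = M * Ebnd N p := by
        rw [Ebnd, if_neg (by push_neg; exact ⟨hp0, hpN⟩)]
        have hPne : (p:ℝ) ≠ 0 := by positivity
        field_simp
      linarith
  have hsum_term : Summable (fun p : ℕ => M * Ebnd N p) := (Ebnd_summable N hN).mul_left M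
  -- final assembly
  set inner : E3 → ℝ :=
    fun u => ∫ s in (0:ℝ)..1, (∑' p : ℕ, fp p u * Hfun p s) * Real.cos ((N:ℝ) * π * s)
    with hinner_def
  by_cases hInt : Integrable (fun u => |inner u|) mu
  · rw [MeasureTheory.integral_eq_lintegral_of_nonneg_ae
      (Filter.Eventually.of_forall fun u => abs_nonneg _) hInt.aestronglyMeasurable]
    have haemeas : ∀ p : ℕ, AEMeasurable
        (fun u => ENNReal.ofReal (|gp p u| * |cCoef N p|)) mu := by
      intro p
      exact ENNReal.measurable_ofReal.comp_aemeasurable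
        (((hgInt p).abs.mul_const (|cCoef N p|)).aestronglyMeasurable.aemeasurable)
    have hle1 : ∫⁻ u, ENNReal.ofReal |inner u| ∂mu
        ≤ ENNReal.ofReal (16 * M / (N:ℝ)^2) := by
      have step1 : ∫⁻ u, ENNReal.ofReal |inner u| ∂mu
          ≤ ∫⁻ u, ∑' p, ENNReal.ofReal (|gp p u| * |cCoef N p|) ∂mu := by
        apply lintegral_mono_ae
        filter_upwards [hae] with u hu
        have hsu : Summable (fun p => |gp p u| * |cCoef N p|) := by
          apply Summable.of_nonneg_of_le (fun p => by positivity) (fun p => ?_)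
            (hu.mul_right (Real.sqrt 2))
          exact mul_le_mul_of_nonneg_left (cCoef_abs_le N p) (abs_nonneg _)
        calc ENNReal.ofReal |inner u|
            ≤ ENNReal.ofReal (∑' p, |gp p u| * |cCoef N p|) :=
              ENNReal.ofReal_le_ofReal (key u hu)
          _ = ∑' p, ENNReal.ofReal (|gp p u| * |cCoef N p|) :=
              ENNReal.ofReal_tsum_of_nonneg (fun p => by positivity) hsu
      have step2 : ∫⁻ u, ∑' p, ENNReal.ofReal (|gp p u| * |cCoef N p|) ∂mu
          = ∑' p, ENNReal.ofReal ((∫ u, |gp p u| ∂mu) * |cCoef N p|) := by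
        rw [lintegral_tsum haemeas]
        apply tsum_congr
        intro p
        rw [← MeasureTheory.ofReal_integral_eq_lintegral_ofReal
          (((hgInt p).abs).mul_const _)
          (Filter.Eventually.of_forall fun u => by positivity)]
        congr 1
        rw [MeasureTheory.integral_mul_const]
      have step3 : ∑' p, ENNReal.ofReal ((∫ u, |gp p u| ∂mu) * |cCoef N p|)
          ≤ ENNReal.ofReal (16 * M / (N:ℝ)^2) := by
        calc ∑' p, ENNReal.ofReal ((∫ u, |gp p u| ∂mu) * |cCoef N p|)
            ≤ ∑' p, ENNReal.ofReal (M * Ebnd N p) :=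
              ENNReal.tsum_le_tsum (fun p => ENNReal.ofReal_le_ofReal (hterm p))
          _ = ENNReal.ofReal (∑' p, M * Ebnd N p) :=
              (ENNReal.ofReal_tsum_of_nonneg
                (fun p => mul_nonneg hM (Ebnd_nonneg N p)) hsum_term).symm
          _ ≤ ENNReal.ofReal (16 * M / (N:ℝ)^2) := by
              apply ENNReal.ofReal_le_ofReal
              rw [tsum_mul_left]
              calc M * ∑' p, Ebnd N p ≤ M * (16 / (N:ℝ)^2) :=
                    mul_le_mul_of_nonneg_left (Ebnd_tsum_le N hN) hM
                _ = 16 * M / (N:ℝ)^2 := by ring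
      exact le_trans (le_trans step1 (le_of_eq step2)) step3
    calc (∫⁻ u, ENNReal.ofReal |inner u| ∂mu).toReal
        ≤ (ENNReal.ofReal (16 * M / (N:ℝ)^2)).toReal :=
          ENNReal.toReal_mono ENNReal.ofReal_ne_top hle1
      _ = 16 * M / (N:ℝ)^2 := ENNReal.toReal_ofReal (by positivity)
  · rw [MeasureTheory.integral_undef hInt]
    positivity
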